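/- In the type B_n Tamari lattice, the elements S_{i,t} (for 1 ≤ i ≤ n and t ∈ {1,...,n-1,∞}) whose bracket vector has entries 0 in positions before i, t in position i, and ∞ in positions after i, are left modular: for all Y < Z in the lattice, (Y ∨ S_{i,t}) ∧ Z = Y ∨ (S_{i,t} ∧ Z). -/

import Mathlib

/-- Condition (i) for type `B_n` bracket vectors: for `i < j` (0-based),
if `r_j - (j-i)` is a nonnegative integer then `r_i ≤ r_j - (j-i)`
(equivalently `r_i + (j-i) ≤ r_j`; when `r_j = ∞` this holds trivially,
matching the convention that `∞` minus an integer is `∞`). -/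
def condIB (n : ℕ) (r : Fin n → ℕ∞) : Prop :=
  ∀ i j : Fin n, i < j → (((j : ℕ) - (i : ℕ) : ℕ) : ℕ∞) ≤ r j →
    r i + (((j : ℕ) - (i : ℕ) : ℕ) : ℕ∞) ≤ r j

/-- Condition (ii) for type `B_n` bracket vectors: if `∞ > r_i ≥ i`
(1-based; here `i = k+1` for the 0-based index `k`) then `r_{n+i-r_i} = ∞`. -/
def condIIB (n : ℕ) (r : Fin n → ℕ∞) : Prop :=
  ∀ (k : Fin n) (t : ℕ), r k = (t : ℕ∞) → ∀ _ht : (k : ℕ) + 1 ≤ t,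
    r ⟨n + (k : ℕ) - t, by have := k.isLt; omega⟩ = ⊤

/-- Entries lie in `{0, …, n-1} ∪ {∞}`. -/
def entriesB (n : ℕ) (r : Fin n → ℕ∞) : Prop :=
  ∀ k, r k = ⊤ ∨ r k ≤ ((n - 1 : ℕ) : ℕ∞)

/-- A type `B_n` bracket vector. -/
def isBVec (n : ℕ) (r : Fin n → ℕ∞) : Prop :=
  entriesB n r ∧ condIB n r ∧ condIIB n r

/-- `u` is the join (least upper bound) of `a` and `b` in the type `B_n`
Tamari lattice of bracket vectors (componentwise order). -/
def isJoinB (n : ℕ) (a b u : Fin n → ℕ∞) : Prop :=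
  isBVec n u ∧ a ≤ u ∧ b ≤ u ∧
    ∀ h : Fin n → ℕ∞, isBVec n h → a ≤ h → b ≤ h → u ≤ h

/-- `m` is the meet (greatest lower bound) of `a` and `b` in the type `B_n`
Tamari lattice of bracket vectors (componentwise order). -/
def isMeetB (n : ℕ) (a b m : Fin n → ℕ∞) : Prop :=
  isBVec n m ∧ m ≤ a ∧ m ≤ b ∧
    ∀ h : Fin n → ℕ∞, isBVec n h → h ≤ a → h ≤ b → h ≤ m

/-- The element `S_{i,t}` (0-based index `k`, so `i = k + 1`): bracket vector
with `0` in positions before `k`, `t` in position `k`, and `∞` after. -/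
def Sel (n : ℕ) (k : Fin n) (t : ℕ∞) : Fin n → ℕ∞ := fun j =>
  if j < k then 0 else if j = k then t else ⊤

/-- `x` is left modular in the type `B_n` Tamari lattice:
`(Y ∨ x) ∧ Z = Y ∨ (x ∧ Z)` for all `Y < Z`. -/
def leftModB (n : ℕ) (x : Fin n → ℕ∞) : Prop :=
  ∀ Y Z : Fin n → ℕ∞, isBVec n Y → isBVec n Z → Y < Z →
    ∀ J M A B : Fin n → ℕ∞,
      isJoinB n Y x J → isMeetB n x Z M →
      isMeetB n J Z A → isJoinB n Y M B → A = B

/-- The elements `S_{i,t}` (for `1 ≤ i ≤ n` and `t ∈ {1,…,n-1,∞}`) are left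
modular in the type `B_n` Tamari lattice. -/
lemma ne_of_gt' {n : ℕ} {j k : Fin n} (h : k < j) : ¬ (j = k) :=
  fun h' => absurd (h' ▸ h) (lt_irrefl _)

lemma up_ok (n : ℕ) (k : Fin n) (t : ℕ∞) (Y : Fin n → ℕ∞) (hY : isBVec n Y)
    (c : ℕ∞) (hYk : Y k ≤ c) (htc : t ≤ c)
    (hci : ∀ i : Fin n, i < k → (((k : ℕ) - (i : ℕ) : ℕ) : ℕ∞) ≤ c →
      Y i + (((k : ℕ) - (i : ℕ) : ℕ) : ℕ∞) ≤ c)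
    (hce : c = ⊤ ∨ c ≤ ((n - 1 : ℕ) : ℕ∞)) :
    isBVec n (fun j => if j < k then Y j else if j = k then c else ⊤) ∧
    Y ≤ (fun j => if j < k then Y j else if j = k then c else ⊤) ∧
    Sel n k t ≤ (fun j => if j < k then Y j else if j = k then c else ⊤) := by
  obtain ⟨hYe, hYi, hYii⟩ := hY
  refine ⟨⟨?_, ?_, ?_⟩, ?_, ?_⟩
  · -- entries
    intro j
    dsimp only
    rcases lt_trichotomy j k with hj | hj | hj
    · rw [if_pos hj]; exact hYe j
    · rw [if_neg (show ¬ j < k by rw [hj]; exact lt_irrefl k), if_pos hj]; exact hce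
    · rw [if_neg (lt_asymm hj : ¬ j < k), if_neg (ne_of_gt' hj)]
      exact Or.inl rfl
  · -- cond I
    intro i j hij hle
    dsimp only at hle ⊢
    rcases lt_trichotomy j k with hj | hj | hj
    · have hi : i < k := lt_trans hij hj
      rw [if_pos hj] at hle
      rw [if_pos hi, if_pos hj]
      exact hYi i j hij hle
    · subst hj
      rw [if_neg (lt_irrefl j), if_pos rfl] at hle
      rw [if_pos hij, if_neg (lt_irrefl j), if_pos rfl]
      exact hci i hij hle
    · rw [if_neg (lt_asymm hj : ¬ j < k), if_neg (ne_of_gt' hj)]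
      exact le_top
  · -- cond II
    intro j t' hjt' hjk
    dsimp only at hjt' ⊢
    rcases lt_trichotomy j k with hj | hj | hj
    · rw [if_pos hj] at hjt'
      have hp := hYii j t' hjt' hjk
      split_ifs with h1 h2
      · exact hp
      · have h2' : Y k = ⊤ := by rw [← h2]; exact hp
        exact top_le_iff.mp (h2' ▸ hYk)
      · rfl
    · rw [if_neg (show ¬ j < k by rw [hj]; exact lt_irrefl k), if_pos hj] at hjt'
      have hc : c ≤ ((n - 1 : ℕ) : ℕ∞) := by
        refine hce.resolve_left ?_
        rw [hjt']; exact WithTop.coe_ne_top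
      have ht'n : t' ≤ n - 1 := by
        rw [hjt'] at hc; exact_mod_cast hc
      have hkj : (j : ℕ) = (k : ℕ) := by rw [hj]
      have hkn : (k : ℕ) < n := k.isLt
      split_ifs with h1 h2
      · have h1' : n + (j : ℕ) - t' < (k : ℕ) := h1
        omega
      · have h2' : n + (j : ℕ) - t' = (k : ℕ) := congrArg Fin.val h2
        omega
      · rfl
    · rw [if_neg (lt_asymm hj : ¬ j < k), if_neg (ne_of_gt' hj)] at hjt'
      exact absurd hjt'.symm (WithTop.coe_ne_top)
  · -- Y ≤ U
    intro j
    dsimp only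
    rcases lt_trichotomy j k with hj | hj | hj
    · rw [if_pos hj]
    · rw [if_neg (show ¬ j < k by rw [hj]; exact lt_irrefl k), if_pos hj, hj]; exact hYk
    · rw [if_neg (lt_asymm hj : ¬ j < k), if_neg (ne_of_gt' hj)]
      exact le_top
  · -- Sel ≤ U
    intro j
    dsimp only [Sel]
    rcases lt_trichotomy j k with hj | hj | hj
    · rw [if_pos hj, if_pos hj]; exact zero_le
    · rw [if_neg (show ¬ j < k by rw [hj]; exact lt_irrefl k), if_pos hj,
        if_neg (show ¬ j < k by rw [hj]; exact lt_irrefl k), if_pos hj]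
      exact htc
    · rw [if_neg (lt_asymm hj : ¬ j < k), if_neg (ne_of_gt' hj),
        if_neg (lt_asymm hj : ¬ j < k), if_neg (ne_of_gt' hj)]

lemma down_ok (n : ℕ) (k : Fin n) (t : ℕ∞) (Z : Fin n → ℕ∞) (hZ : isBVec n Z)
    (c : ℕ∞) (hZk : c ≤ Z k) (hct : c ≤ t)
    (hce : c = ⊤ ∨ c ≤ ((n - 1 : ℕ) : ℕ∞))
    (hcii : ∀ t' : ℕ, c = (t' : ℕ∞) → ∀ _ht : (k : ℕ) + 1 ≤ t',
      Z ⟨n + (k : ℕ) - t', by have := k.isLt; omega⟩ = ⊤) :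
    isBVec n (fun j => if j < k then 0 else if j = k then c else Z j) ∧
    (fun j => if j < k then 0 else if j = k then c else Z j) ≤ Sel n k t ∧
    (fun j => if j < k then 0 else if j = k then c else Z j) ≤ Z := by
  obtain ⟨hZe, hZi, hZii⟩ := hZ
  refine ⟨⟨?_, ?_, ?_⟩, ?_, ?_⟩
  · intro j
    dsimp only
    rcases lt_trichotomy j k with hj | hj | hj
    · rw [if_pos hj]; exact Or.inr (zero_le)
    · rw [if_neg (show ¬ j < k by rw [hj]; exact lt_irrefl k), if_pos hj]; exact hce
    · rw [if_neg (lt_asymm hj : ¬ j < k), if_neg (ne_of_gt' hj)]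
      exact hZe j
  · intro i j hij hle
    dsimp only at hle ⊢
    have hijn : (i : ℕ) < (j : ℕ) := hij
    rcases lt_trichotomy j k with hj | hj | hj
    · have hi : i < k := lt_trans hij hj
      rw [if_pos hj] at hle
      rw [if_pos hi, if_pos hj]
      exfalso
      have : ((j : ℕ) - (i : ℕ) : ℕ) = 0 := by exact_mod_cast le_antisymm hle (zero_le)
      omega
    · subst hj
      rw [if_neg (lt_irrefl j), if_pos rfl] at hle
      rw [if_pos hij, if_neg (lt_irrefl j), if_pos rfl, zero_add]
      exact hle
    · rw [if_neg (lt_asymm hj : ¬ j < k), if_neg (ne_of_gt' hj)] at hle ⊢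
      rcases lt_trichotomy i k with hi | hi | hi
      · rw [if_pos hi, zero_add]; exact hle
      · rw [if_neg (show ¬ i < k by rw [hi]; exact lt_irrefl k), if_pos hi]
        have hik : k < j := hi ▸ hj
        calc c + (((j : ℕ) - (i : ℕ) : ℕ) : ℕ∞) ≤ Z i + (((j : ℕ) - (i : ℕ) : ℕ) : ℕ∞) := by
              rw [hi]; exact add_le_add hZk le_rfl
          _ ≤ Z j := hZi i j hij hle
      · rw [if_neg (lt_asymm hi : ¬ i < k), if_neg (ne_of_gt' hi)]
        exact hZi i j hij hle
  · intro j t' hjt' hjk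
    dsimp only at hjt' ⊢
    rcases lt_trichotomy j k with hj | hj | hj
    · rw [if_pos hj] at hjt'
      exfalso
      have : (0 : ℕ) = t' := by exact_mod_cast hjt'
      omega
    · rw [if_neg (show ¬ j < k by rw [hj]; exact lt_irrefl k), if_pos hj] at hjt'
      have hkj : (j : ℕ) = (k : ℕ) := by rw [hj]
      have hp : Z ⟨n + (k : ℕ) - t', by have := k.isLt; omega⟩ = ⊤ :=
        hcii t' hjt' (by omega)
      have hc : c ≤ ((n - 1 : ℕ) : ℕ∞) := by
        refine hce.resolve_left ?_
        rw [hjt']; exact WithTop.coe_ne_top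
      have ht'n : t' ≤ n - 1 := by rw [hjt'] at hc; exact_mod_cast hc
      have hkn : (k : ℕ) < n := k.isLt
      split_ifs with h1 h2
      · have h1' : n + (j : ℕ) - t' < (k : ℕ) := h1
        omega
      · have h2' : n + (j : ℕ) - t' = (k : ℕ) := congrArg Fin.val h2
        omega
      · have : (⟨n + (j : ℕ) - t', by omega⟩ : Fin n) = ⟨n + (k : ℕ) - t', by omega⟩ := by
          apply Fin.ext; simp; omega
        rw [this]; exact hp
    · rw [if_neg (lt_asymm hj : ¬ j < k), if_neg (ne_of_gt' hj)] at hjt'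
      have hp := hZii j t' hjt' hjk
      have hZj : Z j ≤ ((n - 1 : ℕ) : ℕ∞) := by
        refine (hZe j).resolve_left ?_
        rw [hjt']; exact WithTop.coe_ne_top
      have ht'n : t' ≤ n - 1 := by rw [hjt'] at hZj; exact_mod_cast hZj
      have hkn : (j : ℕ) < n := j.isLt
      have hkj : (k : ℕ) < (j : ℕ) := hj
      split_ifs with h1 h2
      · have h1' : n + (j : ℕ) - t' < (k : ℕ) := h1
        omega
      · have h2' : n + (j : ℕ) - t' = (k : ℕ) := congrArg Fin.val h2
        omega
      · exact hp
  · intro j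
    dsimp only [Sel]
    rcases lt_trichotomy j k with hj | hj | hj
    · rw [if_pos hj, if_pos hj]
    · rw [if_neg (show ¬ j < k by rw [hj]; exact lt_irrefl k), if_pos hj,
        if_neg (show ¬ j < k by rw [hj]; exact lt_irrefl k), if_pos hj]
      exact hct
    · rw [if_neg (lt_asymm hj : ¬ j < k), if_neg (ne_of_gt' hj),
        if_neg (lt_asymm hj : ¬ j < k), if_neg (ne_of_gt' hj)]
      exact le_top
  · intro j
    dsimp only
    rcases lt_trichotomy j k with hj | hj | hj
    · rw [if_pos hj]; exact zero_le
    · rw [if_neg (show ¬ j < k by rw [hj]; exact lt_irrefl k), if_pos hj, hj]; exact hZk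
    · rw [if_neg (lt_asymm hj : ¬ j < k), if_neg (ne_of_gt' hj)]

theorem Sel_leftModular (n : ℕ) (k : Fin n) (t : ℕ∞)
    (ht1 : 1 ≤ t) (ht2 : t = ⊤ ∨ t ≤ ((n - 1 : ℕ) : ℕ∞)) :
    leftModB n (Sel n k t) := by
  intro Y Z hY hZ hYZ J M A B hJ hM hA hB
  obtain ⟨hJb, hYJ, hSJ, hJmin⟩ := hJ
  obtain ⟨hMb, hMS, hMZ, hMmax⟩ := hM
  obtain ⟨hAb, hAJ, hAZ, hAmax⟩ := hA
  obtain ⟨hBb, hYB, hMB, hBmin⟩ := hB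
  have hYZ' : Y ≤ Z := le_of_lt hYZ
  have hYA : Y ≤ A := hAmax Y hY hYJ hYZ'
  have hMJ : M ≤ J := le_trans hMS hSJ
  have hMA : M ≤ A := hAmax M hMb hMJ hMZ
  have hBA : B ≤ A := hBmin A hAb hYA hMA
  -- J j = Y j for j < k
  have hW := up_ok n k t Y hY ⊤ le_top le_top (fun i _ _ => le_top) (Or.inl rfl)
  have hJW : J ≤ _ := hJmin _ hW.1 hW.2.1 hW.2.2
  have hJY : ∀ j : Fin n, j < k → J j ≤ Y j := by
    intro j hj
    have := hJW j
    rwa [if_pos hj] at this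
  -- Z j ≤ M j for j > k
  have hL := down_ok n k t Z hZ 0 (zero_le) (zero_le) (Or.inr (zero_le))
    (fun t' h0 ht' => by
      exfalso
      have : (0 : ℕ) = t' := by exact_mod_cast h0
      omega)
  have hLM : _ ≤ M := hMmax _ hL.1 hL.2.1 hL.2.2
  have hZM : ∀ j : Fin n, k < j → Z j ≤ M j := by
    intro j hj
    have := hLM j
    rwa [if_neg (lt_asymm hj : ¬ j < k), if_neg (ne_of_gt' hj)] at this
  -- B i = Y i for i < k
  have hBY : ∀ i : Fin n, i < k → B i = Y i := by
    intro i hi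
    exact le_antisymm (le_trans (hBA i) (le_trans (hAJ i) (hJY i hi))) (hYB i)
  refine le_antisymm ?_ hBA
  intro j
  rcases lt_trichotomy j k with hj | hj | hj
  · -- A j ≤ J j ≤ Y j ≤ B j
    exact le_trans (hAJ j) (le_trans (hJY j hj) (hYB j))
  · -- the crucial coordinate
    subst hj
    by_cases hcase1 : t ≤ B j
    · -- up with c = B j
      have hU := up_ok n j t Y hY (B j) (hYB j) hcase1
        (fun i hij hle => by
          have h1 := hBb.2.1 i j hij hle
          rwa [hBY i hij] at h1)
        (hBb.1 j)
      have := (hJmin _ hU.1 hU.2.1 hU.2.2) j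
      rw [if_neg (lt_irrefl j), if_pos rfl] at this
      exact le_trans (hAJ j) this
    · have hbt : B j < t := not_le.mp hcase1
      by_cases hcase2 : A j ≤ t
      · -- down with c = A j
        have hD := down_ok n j t Z hZ (A j) (hAZ j) hcase2 (hAb.1 j)
          (fun t' heq hge => by
            have h1 := hAb.2.2 j t' heq hge
            have h2 := hAZ ⟨n + (j : ℕ) - t', by have := j.isLt; omega⟩
            rw [h1] at h2
            exact top_le_iff.mp h2)
        have := (hMmax _ hD.1 hD.2.1 hD.2.2) j
        rw [if_neg (lt_irrefl j), if_pos rfl] at this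
        exact le_trans this (hMB j)
      · -- contradiction branch
        exfalso
        have hta : t < A j := not_le.mp hcase2
        have htne : t ≠ ⊤ := hta.ne_top
        lift t to ℕ using htne with t'
        have hbne : B j ≠ ⊤ := hbt.ne_top
        obtain ⟨b', hb'⟩ : ∃ b' : ℕ, B j = (b' : ℕ∞) := by
          lift B j to ℕ using hbne with b'; exact ⟨b', rfl⟩
        -- choose v : ℕ with t' ≤ v, ↑v < A j, v ≤ n - 1
        obtain ⟨v, hv1, hv2, hv3⟩ : ∃ v : ℕ, t' ≤ v ∧ (v : ℕ∞) < A j ∧ v ≤ n - 1 := by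
          rcases hAb.1 j with ha | ha
          · refine ⟨n - 1, ?_, ?_, le_refl _⟩
            · have := ht2.resolve_left WithTop.coe_ne_top
              exact_mod_cast this
            · rw [ha]; exact WithTop.coe_lt_top _
          · have hane : A j ≠ ⊤ := ne_top_of_le_ne_top WithTop.coe_ne_top ha
            obtain ⟨a', ha'⟩ : ∃ a' : ℕ, A j = (a' : ℕ∞) := by
              lift A j to ℕ using hane with a'; exact ⟨a', rfl⟩
            have hta' : t' < a' := by rw [ha'] at hta; exact_mod_cast hta
            have han : a' ≤ n - 1 := by rw [ha'] at ha; exact_mod_cast ha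
            refine ⟨a' - 1, by omega, ?_, by omega⟩
            rw [ha']; exact_mod_cast (by omega : a' - 1 < a')
        -- extract a violating index i
        have hex : ∃ i : Fin n, i < j ∧
            ¬ (Y i + (((j : ℕ) - (i : ℕ) : ℕ) : ℕ∞) ≤ (v : ℕ∞)) := by
          by_contra hno
          push_neg at hno
          have hU := up_ok n j t' Y hY (v : ℕ∞)
            (le_trans (hYB j) (le_trans hbt.le (by exact_mod_cast hv1)))
            (by exact_mod_cast hv1)
            (fun i hij _ => hno i hij)
            (Or.inr (by exact_mod_cast hv3))
          have := (hJmin _ hU.1 hU.2.1 hU.2.2) j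
          rw [if_neg (lt_irrefl j), if_pos rfl] at this
          exact absurd (lt_of_le_of_lt (le_trans (hAJ j) this) hv2) (lt_irrefl _)
        obtain ⟨i, hij, hiv⟩ := hex
        have hbv : B j ≤ (v : ℕ∞) :=
          le_trans hbt.le (by exact_mod_cast hv1)
        have hkb : ¬ ((((j : ℕ) - (i : ℕ) : ℕ) : ℕ∞) ≤ B j) := by
          intro hle
          apply hiv
          have h1 := hBb.2.1 i j hij hle
          rw [hBY i hij] at h1
          exact le_trans h1 hbv
        have hlt : B j < (((j : ℕ) - (i : ℕ) : ℕ) : ℕ∞) := not_le.mp hkb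
        rw [hb'] at hlt
        have hlt' : b' < (j : ℕ) - (i : ℕ) := by exact_mod_cast hlt
        have hjik : (j : ℕ) - (i : ℕ) ≤ (j : ℕ) := Nat.sub_le _ _
        have hb'k : b' + 1 ≤ (j : ℕ) := by omega
        have hb't : b' + 1 ≤ t' := by
          rw [hb'] at hbt
          have : b' < t' := by exact_mod_cast hbt
          omega
        have hkn1 : (j : ℕ) ≤ n - 1 := by have := j.isLt; omega
        have hD := down_ok n j t' Z hZ ((b' + 1 : ℕ) : ℕ∞)
          (le_trans (by exact_mod_cast hb't) (le_trans hta.le (hAZ j)))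
          (by exact_mod_cast hb't)
          (Or.inr (by exact_mod_cast (by omega : b' + 1 ≤ n - 1)))
          (fun t'' heq hge => by
            exfalso
            have : b' + 1 = t'' := by exact_mod_cast heq
            omega)
        have := (hMmax _ hD.1 hD.2.1 hD.2.2) j
        rw [if_neg (lt_irrefl j), if_pos rfl] at this
        have hfin : ((b' + 1 : ℕ) : ℕ∞) ≤ (b' : ℕ∞) := by
          rw [← hb']
          exact le_trans this (hMB j)
        have : b' + 1 ≤ b' := by exact_mod_cast hfin
        omega
  · -- j > k : A j ≤ Z j ≤ M j ≤ B j
    exact le_trans (hAZ j) (le_trans (hZM j hj) (hMB j))
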